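/- All divided powers of E_i and F_i have nonnegative matrix entries in the given basis of V: for every i ∈ I, every integer k ≥ 1, and every basis vector b ∈ {X_α : α ∈ R} ∪ {t_j : j ∈ I}, the vector E_i^{(k)}b := ([k]_i!)^{−1}E_i^k b is either 0 or equal to f·b' for some basis vector b' and some Laurent polynomial f ∈ ℕ[v, v^{−1}] with nonnegative integer coefficients; the same holds for F_i^{(k)}b := ([k]_i!)^{−1}F_i^k b. -/

import Mathlib

open scoped RealInnerProductSpace

/-- A finite, reduced, irreducible, crystallographic root system `R` spanning a
finite-dimensional real inner product space `E`, together with a base of simple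
roots indexed by `I`, the integral Cartan pairing `pair`, and for each simple
root `αᵢ` and each root `α` not proportional to `αᵢ` the chain lengths
`p i α`, `q i α` (largest `n ≥ 0` with `α + n αᵢ`, resp. `α - n αᵢ`, a root). -/
structure RootSystemData (E : Type) [NormedAddCommGroup E] [InnerProductSpace ℝ E]
    [FiniteDimensional ℝ E] (I : Type) [Fintype I] : Type where
  R : Set E
  finite : R.Finite
  zero_not_mem : (0 : E) ∉ R
  spans : Submodule.span ℝ R = ⊤
  neg_mem : ∀ α ∈ R, -α ∈ R
  reduced : ∀ α ∈ R, ∀ r : ℝ, r • α ∈ R → r = 1 ∨ r = -1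
  pair : E → E → ℤ
  pair_def : ∀ α ∈ R, ∀ β ∈ R, (pair α β : ℝ) * ⟪α, α⟫ = 2 * ⟪α, β⟫
  reflect_mem : ∀ α ∈ R, ∀ β ∈ R, β - (pair α β : ℝ) • α ∈ R
  irreducible : ∀ R₁ R₂ : Set E, R = R₁ ∪ R₂ →
    (∀ α ∈ R₁, ∀ β ∈ R₂, ⟪α, β⟫ = 0) → R₁ = ∅ ∨ R₂ = ∅
  simple : I → E
  simple_mem : ∀ i, simple i ∈ R
  simple_indep : LinearIndependent ℝ simple
  simple_gen : ∀ α ∈ R,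
    (∃ c : I → ℕ, α = ∑ i, (c i : ℝ) • simple i) ∨
    (∃ c : I → ℕ, α = -(∑ i, (c i : ℝ) • simple i))
  p : I → E → ℕ
  q : I → E → ℕ
  p_mem : ∀ i, ∀ α ∈ R, (∀ r : ℝ, α ≠ r • simple i) →
    ∀ k : ℕ, k ≤ p i α → α + (k : ℝ) • simple i ∈ R
  p_max : ∀ i, ∀ α ∈ R, (∀ r : ℝ, α ≠ r • simple i) →
    α + ((p i α : ℝ) + 1) • simple i ∉ R
  q_mem : ∀ i, ∀ α ∈ R, (∀ r : ℝ, α ≠ r • simple i) →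
    ∀ k : ℕ, k ≤ q i α → α - (k : ℝ) • simple i ∈ R
  q_max : ∀ i, ∀ α ∈ R, (∀ r : ℝ, α ≠ r • simple i) →
    α - ((q i α : ℝ) + 1) • simple i ∉ R

noncomputable section

/-- The field `ℚ(v)` of rational functions in one variable `v` over `ℚ`. -/
abbrev K : Type := RatFunc ℚ

/-- The variable `v` of `ℚ(v)`. -/
def qv : K := RatFunc.X

/-- The quantum integer `[n]ᵢ = (vᵢⁿ - vᵢ⁻ⁿ)/(vᵢ - vᵢ⁻¹)` where `vᵢ = v^d`. -/
def qnum (d : ℕ) (n : ℤ) : K :=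
  ((qv ^ d) ^ n - (qv ^ d) ^ (-n)) / (qv ^ d - (qv ^ d)⁻¹)

/-- The quantum factorial `[n]ᵢ! = ∏_{s=1}^n [s]ᵢ` where `vᵢ = v^d`. -/
def qfact (d : ℕ) (n : ℕ) : K := ∏ s ∈ Finset.range n, qnum d ((s : ℤ) + 1)

variable {E : Type} [NormedAddCommGroup E] [InnerProductSpace ℝ E]
  [FiniteDimensional ℝ E] {I : Type} [Fintype I]

/-- The `ℚ(v)`-vector space `V` with basis `{X_α : α ∈ R} ∪ {t_i : i ∈ I}`. -/
abbrev VV (D : RootSystemData E I) : Type := ({x : E // x ∈ D.R} ⊕ I) →₀ K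

/-- The basis vector `X_α` of `V`, for a root `α`. -/
def XX (D : RootSystemData E I) (a : {x : E // x ∈ D.R}) : VV D :=
  Finsupp.single (Sum.inl a) 1

/-- The basis vector `t_j` of `V`, for `j ∈ I`. -/
def tv (D : RootSystemData E I) (j : I) : VV D :=
  Finsupp.single (Sum.inr j) 1

open Classical in
/-- The operator `E_i` on `V`:  `E_i X_α = [q_{i,α}+1]ᵢ X_{α+αᵢ}` if `α+αᵢ ∈ R`,
`E_i X_{-αᵢ} = tᵢ`, `E_i X_α = 0` otherwise, and
`E_i t_j = [|⟨αⱼ∨,αᵢ⟩|]ⱼ X_{αᵢ}`. -/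
def Eop (D : RootSystemData E I) (d : I → ℕ) (i : I) : VV D →ₗ[K] VV D :=
  Finsupp.lift (VV D) K _ fun b =>
    match b with
    | Sum.inl a =>
        if h : (a : E) + D.simple i ∈ D.R then
          qnum (d i) ((D.q i (a : E) : ℤ) + 1) • XX D ⟨(a : E) + D.simple i, h⟩
        else if (a : E) = -(D.simple i) then tv D i
        else 0
    | Sum.inr j =>
        qnum (d j) |D.pair (D.simple j) (D.simple i)| •
          XX D ⟨D.simple i, D.simple_mem i⟩

open Classical in
/-- The operator `F_i` on `V`:  `F_i X_α = [p_{i,α}+1]ᵢ X_{α-αᵢ}` if `α-αᵢ ∈ R`,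
`F_i X_{αᵢ} = tᵢ`, `F_i X_α = 0` otherwise, and
`F_i t_j = [|⟨αⱼ∨,αᵢ⟩|]ⱼ X_{-αᵢ}`. -/
def Fop (D : RootSystemData E I) (d : I → ℕ) (i : I) : VV D →ₗ[K] VV D :=
  Finsupp.lift (VV D) K _ fun b =>
    match b with
    | Sum.inl a =>
        if h : (a : E) - D.simple i ∈ D.R then
          qnum (d i) ((D.p i (a : E) : ℤ) + 1) • XX D ⟨(a : E) - D.simple i, h⟩
        else if (a : E) = D.simple i then tv D i
        else 0
    | Sum.inr j =>
        qnum (d j) |D.pair (D.simple j) (D.simple i)| •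
          XX D ⟨-(D.simple i), D.neg_mem (D.simple i) (D.simple_mem i)⟩


lemma qv_ne_zero : qv ≠ 0 := by
  simpa [qv] using RatFunc.X_ne_zero (K := ℚ)

lemma qv_pow_ne_one {n : ℕ} (hn : n ≠ 0) : qv ^ n ≠ 1 := by
  intro h
  have hx : qv = algebraMap (Polynomial ℚ) K Polynomial.X := (RatFunc.algebraMap_X).symm
  rw [hx, ← map_pow, ← map_one (algebraMap (Polynomial ℚ) K)] at h
  have := IsFractionRing.injective (Polynomial ℚ) K h
  have := congrArg Polynomial.natDegree this
  simp [Polynomial.natDegree_X_pow] at this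
  exact hn this

lemma qvz_ne_zero (m : ℤ) : qv ^ m ≠ 0 := zpow_ne_zero m qv_ne_zero

lemma w_ne_zero (d : ℕ) : (qv ^ d : K) ≠ 0 := pow_ne_zero d qv_ne_zero

lemma wz_ne_one {d : ℕ} (hd : 1 ≤ d) {m : ℤ} (hm : m ≠ 0) : (qv ^ d : K) ^ m ≠ 1 := by
  have key : ∀ m' : ℤ, 0 < m' → (qv ^ d : K) ^ m' ≠ 1 := by
    intro m' hm' h
    lift m' to ℕ using le_of_lt hm'
    rw [zpow_natCast, ← pow_mul] at h
    have hm'' : m' ≠ 0 := by exact_mod_cast hm'.ne'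
    exact qv_pow_ne_one (Nat.mul_ne_zero (by omega) hm'') h
  rcases lt_trichotomy m 0 with h' | h' | h'
  · intro h
    apply key (-m) (by omega)
    rw [zpow_neg, h, inv_one]
  · exact absurd h' hm
  · exact key m h'

lemma w_sub_inv_ne {d : ℕ} (hd : 1 ≤ d) : (qv ^ d : K) - (qv ^ d)⁻¹ ≠ 0 := by
  intro h
  have hw := w_ne_zero d
  have h1 : (qv ^ d : K) = (qv ^ d)⁻¹ := sub_eq_zero.mp h
  have h2 : (qv ^ d : K) ^ (2 : ℤ) = 1 := by
    rw [zpow_two]; nth_rewrite 2 [h1]; exact mul_inv_cancel₀ hw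
  exact wz_ne_one hd (by omega) h2

lemma qnum_ne_zero {d : ℕ} (hd : 1 ≤ d) {n : ℤ} (hn : n ≠ 0) : qnum d n ≠ 0 := by
  unfold qnum
  apply div_ne_zero _ (w_sub_inv_ne hd)
  intro h
  have hw := w_ne_zero d
  have h1 : (qv ^ d : K) ^ n = (qv ^ d) ^ (-n) := sub_eq_zero.mp h
  have h2 : (qv ^ d : K) ^ (n + n) = 1 := by
    rw [zpow_add₀ hw]; nth_rewrite 2 [h1]; rw [← zpow_add₀ hw]; simp
  exact wz_ne_one hd (by omega) h2

lemma qfact_ne_zero {d : ℕ} (hd : 1 ≤ d) (k : ℕ) : qfact d k ≠ 0 := by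
  unfold qfact
  apply Finset.prod_ne_zero_iff.mpr
  intro s _
  exact qnum_ne_zero hd (by omega)

lemma qnum_zero (d : ℕ) : qnum d 0 = 0 := by simp [qnum]

lemma qnum_one {d : ℕ} (hd : 1 ≤ d) : qnum d 1 = 1 := by
  unfold qnum
  rw [div_eq_one_iff_eq (w_sub_inv_ne hd)]
  simp [zpow_neg]

-- recurrence: [n+1] = w^n + w⁻¹ [n]
lemma qnum_succ {d : ℕ} (hd : 1 ≤ d) (n : ℕ) :
    qnum d ((n : ℤ) + 1) = (qv ^ d : K) ^ (n : ℤ) + (qv ^ d)⁻¹ * qnum d n := by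
  have hw := w_ne_zero d
  have hden := w_sub_inv_ne hd
  have key : (qv ^ d : K) ^ ((n:ℤ)+1) - (qv ^ d) ^ (-((n:ℤ)+1))
      = (qv ^ d) ^ (n:ℤ) * (qv ^ d - (qv ^ d)⁻¹) + (qv ^ d)⁻¹ * ((qv ^ d) ^ (n:ℤ) - (qv ^ d) ^ (-(n:ℤ))) := by
    rw [zpow_add₀ hw, neg_add, zpow_add₀ hw, zpow_neg, zpow_neg, zpow_one]
    field_simp
    ring
  unfold qnum
  rw [key, add_div, mul_div_assoc (qv^d : K)⁻¹, mul_div_cancel_right₀ _ hden]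

lemma pascal_aux (w : K) (hw : w ≠ 0) (a b : ℤ) :
    w^(a+b+1) - w^(-(a+b+1)) = w^a * (w^(b+1) - w^(-(b+1))) + w^(-(b+1)) * (w^a - w^(-a)) := by
  simp only [neg_add, zpow_add₀ hw, zpow_neg, zpow_one]
  field_simp
  ring

lemma qnum_pascal {d : ℕ} (hd : 1 ≤ d) (q k : ℕ) :
    qnum d ((q:ℤ) + k + 1) =
      (qv ^ d : K) ^ (q:ℤ) * qnum d ((k:ℤ) + 1)
        + (qv ^ d : K) ^ (-((k:ℤ) + 1)) * qnum d q := by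
  have hw := w_ne_zero d
  unfold qnum
  rw [← mul_div_assoc, ← mul_div_assoc, ← add_div]
  congr 1
  exact pascal_aux _ hw _ _

def Gd (f : K) : Prop := ∃ c : ℤ →₀ ℕ, f = c.sum fun m a => (a : K) * qv ^ m

lemma Gd_zero : Gd 0 := ⟨0, by simp⟩

lemma Gd_monomial (t : ℤ) (a : ℕ) : Gd ((a : K) * qv ^ t) :=
  ⟨Finsupp.single t a, by rw [Finsupp.sum_single_index (by simp)]⟩

lemma Gd_one : Gd 1 := by simpa using Gd_monomial 0 1

lemma Gd_add {f g : K} (hf : Gd f) (hg : Gd g) : Gd (f + g) := by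
  obtain ⟨c, rfl⟩ := hf
  obtain ⟨c', rfl⟩ := hg
  exact ⟨c + c', by rw [Finsupp.sum_add_index (by simp) (by intros; push_cast; ring)]⟩

lemma Gd_smul (t : ℤ) {f : K} (hf : Gd f) : Gd (qv ^ t * f) := by
  obtain ⟨c, rfl⟩ := hf
  refine ⟨Finsupp.mapDomain (· + t) c, ?_⟩
  rw [Finsupp.sum_mapDomain_index_inj (add_left_injective t)]
  rw [Finsupp.mul_sum]
  apply Finsupp.sum_congr
  intro m _
  rw [zpow_add₀ qv_ne_zero]
  ring

lemma Gd_qnum {d : ℕ} (hd : 1 ≤ d) (n : ℕ) : Gd (qnum d n) := by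
  induction n with
  | zero => simpa [qnum_zero] using Gd_zero
  | succ n ih =>
      rw [show ((n+1 : ℕ) : ℤ) = (n : ℤ) + 1 by push_cast; ring, qnum_succ hd]
      apply Gd_add
      · have : ((qv ^ d : K)) ^ (n:ℤ) = (1:ℕ) * qv ^ ((d*n : ℕ) : ℤ) := by
          rw [← zpow_natCast qv d, ← zpow_mul]
          push_cast
          ring_nf
        rw [this]
        exact Gd_monomial _ 1
      · have : ((qv ^ d : K))⁻¹ = qv ^ (-(d:ℤ)) := by
          rw [← zpow_natCast qv d, ← zpow_neg]
        rw [this]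
        exact Gd_smul _ ih

lemma qbinom_key {d : ℕ} (hd : 1 ≤ d) :
    ∀ n q k : ℕ, q + k ≤ n →
      ∃ g, Gd g ∧ (∏ s ∈ Finset.range k, qnum d ((q:ℤ) + s + 1)) = g * qfact d k := by
  intro n
  induction n with
  | zero =>
      intro q k h
      obtain rfl : k = 0 := by omega
      exact ⟨1, Gd_one, by simp [qfact]⟩
  | succ n ih =>
      intro q k h
      match k with
      | 0 => exact ⟨1, Gd_one, by simp [qfact]⟩
      | k + 1 =>
        have hfact : qfact d (k+1) = qfact d k * qnum d ((k:ℤ) + 1) :=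
          Finset.prod_range_succ _ _
        match q with
        | 0 =>
          obtain ⟨g, hg, hB⟩ := ih 0 k (by omega)
          refine ⟨g, hg, ?_⟩
          rw [Finset.prod_range_succ, hB]
          norm_num
          rw [hfact]
          ring
        | q + 1 =>
          obtain ⟨g, hg, hB⟩ := ih (q+1) k (by omega)
          obtain ⟨g', hg', hB'⟩ := ih q (k+1) (by omega)
          have hstep : qnum d ((q:ℤ)+1) * (∏ s ∈ Finset.range k, qnum d (((q:ℤ)+1) + s + 1))
              = ∏ s ∈ Finset.range (k+1), qnum d ((q:ℤ) + s + 1) := by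
            rw [Finset.prod_range_succ']
            have h0 : qnum d ((q:ℤ) + ((0:ℕ):ℤ) + 1) = qnum d ((q:ℤ)+1) := by norm_num
            have h1 : ∀ s:ℕ, qnum d ((q:ℤ) + ((s+1:ℕ):ℤ) + 1) = qnum d (((q:ℤ)+1) + s + 1) := by
              intro s; congr 1
              all_goals (push_cast; try ring)
            rw [h0, mul_comm]
            congr 1
            exact Finset.prod_congr rfl fun s _ => (h1 s).symm
          have hBcast : (∏ s ∈ Finset.range k, qnum d (((q:ℤ)+1) + s + 1)) = g * qfact d k := by
            rw [← hB]
            apply Finset.prod_congr rfl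
            intro s _
            congr 1
            all_goals (push_cast; try ring)
          have hcomb : qnum d ((q:ℤ)+1) * (∏ s ∈ Finset.range k, qnum d (((q:ℤ)+1) + s + 1))
              = g' * qfact d (k+1) := by rw [hstep]; exact hB'
          have hww : (qv ^ d : K) ^ (-((k:ℤ)+1)) = qv ^ (-((d:ℤ) * ((k:ℤ)+1))) := by
            rw [← zpow_natCast qv d, ← zpow_mul, mul_neg]
          refine ⟨(qv ^ d : K) ^ ((q:ℤ)+1) * g + qv ^ (-((d:ℤ) * ((k:ℤ)+1))) * g', ?_, ?_⟩
          · refine Gd_add ?_ (Gd_smul _ hg')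
            have : ((qv ^ d : K)) ^ ((q:ℤ)+1) = qv ^ ((d * (q+1) : ℕ) : ℤ) := by
              rw [← zpow_natCast qv d, ← zpow_mul]
              push_cast
              ring_nf
            rw [this]; exact Gd_smul _ hg
          · have hprod : (∏ s ∈ Finset.range (k+1), qnum d (((q+1:ℕ):ℤ) + s + 1))
                = (∏ s ∈ Finset.range k, qnum d (((q:ℤ)+1) + s + 1)) * qnum d (((q:ℤ)+1) + k + 1) := by
              rw [show ((q+1:ℕ):ℤ) = (q:ℤ)+1 by push_cast; ring]
              exact Finset.prod_range_succ _ _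
            rw [hprod]
            have hpas := qnum_pascal hd (q+1) k
            rw [show (((q+1:ℕ)):ℤ) = (q:ℤ)+1 by push_cast; ring] at hpas
            rw [hpas, ← hww]
            linear_combination ((qv^d:K)^((q:ℤ)+1) * qnum d ((k:ℤ)+1)) * hBcast
              + (qv^d:K)^(-((k:ℤ)+1)) * hcomb
              - ((qv^d:K)^((q:ℤ)+1) * g) * hfact


namespace RootSystemData

variable {E : Type} [NormedAddCommGroup E] [InnerProductSpace ℝ E]
  [FiniteDimensional ℝ E] {I : Type} [Fintype I] (D : RootSystemData E I)

lemma simple_ne_zero (i : I) : D.simple i ≠ 0 := fun h => D.zero_not_mem (h ▸ D.simple_mem i)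

lemma prop_cases {i : I} {a : E} (ha : a ∈ D.R) {r : ℝ} (h : a = r • D.simple i) :
    a = D.simple i ∨ a = -D.simple i := by
  rcases D.reduced (D.simple i) (D.simple_mem i) r (h ▸ ha) with h1 | h1 <;> subst h1 <;> simp [h]

lemma two_smul_not_mem (i : I) : D.simple i + D.simple i ∉ D.R := by
  intro h
  have h2 : ((2:ℝ)) • D.simple i ∈ D.R := by
    rw [two_smul]; exact h
  rcases D.reduced (D.simple i) (D.simple_mem i) 2 h2 with h' | h' <;> norm_num at h'

lemma neg_two_smul_not_mem (i : I) : -D.simple i - D.simple i ∉ D.R := by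
  intro h
  have : -(D.simple i + D.simple i) ∈ D.R := by
    convert h using 1; abel
  exact D.two_smul_not_mem i (by simpa using D.neg_mem _ this)

lemma not_prop_add {i : I} {a : E} (h : ∀ r : ℝ, a ≠ r • D.simple i) (c : ℝ) :
    ∀ r : ℝ, a + c • D.simple i ≠ r • D.simple i := by
  intro r hr
  exact h (r - c) (by rw [sub_smul]; rw [eq_sub_iff_add_eq]; linear_combination (norm := module) hr)

lemma not_prop_neg {i : I} {a : E} (h : ∀ r : ℝ, a ≠ r • D.simple i) :
    ∀ r : ℝ, -a ≠ r • D.simple i := by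
  intro r hr
  exact h (-r) (by rw [neg_smul, ← hr]; abel)

lemma q_unique {i : I} {b : E} (hb : b ∈ D.R) (hprop : ∀ r : ℝ, b ≠ r • D.simple i)
    (n : ℕ) (hmem : ∀ k : ℕ, k ≤ n → b - (k:ℝ) • D.simple i ∈ D.R)
    (hmax : b - ((n:ℝ) + 1) • D.simple i ∉ D.R) : D.q i b = n := by
  by_contra hne
  rcases lt_or_gt_of_ne hne with h | h
  · have h1 := D.q_max i b hb hprop
    have h2 := hmem (D.q i b + 1) (by omega)
    push_cast at h2
    exact h1 h2
  · have h2 := D.q_mem i b hb hprop (n+1) (by omega)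
    push_cast at h2
    exact hmax h2

lemma q_succ {i : I} {a : E} (ha : a ∈ D.R) (hprop : ∀ r : ℝ, a ≠ r • D.simple i)
    (hmem : a + D.simple i ∈ D.R) : D.q i (a + D.simple i) = D.q i a + 1 := by
  apply D.q_unique hmem (by simpa using D.not_prop_add hprop 1)
  · intro k hk
    match k with
    | 0 => simpa using hmem
    | k + 1 =>
      have := D.q_mem i a ha hprop k (by omega)
      convert this using 1
      push_cast
      module
  · have := D.q_max i a ha hprop
    intro hc
    apply this
    convert hc using 1
    push_cast
    module

lemma q_neg_eq_p {i : I} {a : E} (ha : a ∈ D.R) (hprop : ∀ r : ℝ, a ≠ r • D.simple i) :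
    D.q i (-a) = D.p i a := by
  apply D.q_unique (D.neg_mem a ha) (D.not_prop_neg hprop)
  · intro k hk
    have := D.p_mem i a ha hprop k hk
    have h2 := D.neg_mem _ this
    convert h2 using 1
    module
  · intro hc
    apply D.p_max i a ha hprop
    have := D.neg_mem _ hc
    convert this using 1
    module

lemma pair_self (i : I) :
    D.pair (D.simple i) (D.simple i) = 2 := by
  have := D.pair_def (D.simple i) (D.simple_mem i) (D.simple i) (D.simple_mem i)
  have h2 : (D.pair (D.simple i) (D.simple i) : ℝ) = 2 := by
    have hne : ⟪D.simple i, D.simple i⟫ ≠ 0 := inner_self_ne_zero.mpr (D.simple_ne_zero i)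
    exact mul_right_cancel₀ hne this
  exact_mod_cast h2

end RootSystemData

namespace RootSystemData

variable {E : Type} [NormedAddCommGroup E] [InnerProductSpace ℝ E]
  [FiniteDimensional ℝ E] {I : Type} [Fintype I] (D : RootSystemData E I)
  (d : I → ℕ)

open Classical in
lemma Eop_X (i : I) (a : {x : E // x ∈ D.R}) :
    Eop D d i (XX D a) =
      (if h : (a : E) + D.simple i ∈ D.R then
          qnum (d i) ((D.q i (a : E) : ℤ) + 1) • XX D ⟨(a : E) + D.simple i, h⟩
        else if (a : E) = -(D.simple i) then tv D i
        else 0) := by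
  rw [Eop]
  simp [XX, Finsupp.lift_apply, Finsupp.sum_single_index]

lemma Eop_tv (i j : I) :
    Eop D d i (tv D j) =
      qnum (d j) |D.pair (D.simple j) (D.simple i)| • XX D ⟨D.simple i, D.simple_mem i⟩ := by
  rw [Eop]
  simp [tv, Finsupp.lift_apply, Finsupp.sum_single_index]

open Classical in
lemma Fop_X (i : I) (a : {x : E // x ∈ D.R}) :
    Fop D d i (XX D a) =
      (if h : (a : E) - D.simple i ∈ D.R then
          qnum (d i) ((D.p i (a : E) : ℤ) + 1) • XX D ⟨(a : E) - D.simple i, h⟩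
        else if (a : E) = D.simple i then tv D i
        else 0) := by
  rw [Fop]
  simp [XX, Finsupp.lift_apply, Finsupp.sum_single_index]

lemma Fop_tv (i j : I) :
    Fop D d i (tv D j) =
      qnum (d j) |D.pair (D.simple j) (D.simple i)| •
        XX D ⟨-(D.simple i), D.neg_mem _ (D.simple_mem i)⟩ := by
  rw [Fop]
  simp [tv, Finsupp.lift_apply, Finsupp.sum_single_index]

end RootSystemData

namespace RootSystemData

variable {E : Type} [NormedAddCommGroup E] [InnerProductSpace ℝ E]
  [FiniteDimensional ℝ E] {I : Type} [Fintype I] (D : RootSystemData E I)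
  (d : I → ℕ)

def invol : ({x : E // x ∈ D.R} ⊕ I) → ({x : E // x ∈ D.R} ⊕ I)
  | Sum.inl a => Sum.inl ⟨-(a : E), D.neg_mem _ a.2⟩
  | Sum.inr j => Sum.inr j

lemma invol_invol (b : {x : E // x ∈ D.R} ⊕ I) : D.invol (D.invol b) = b := by
  cases b with
  | inl a => simp [invol]
  | inr j => rfl

def sig : VV D →ₗ[K] VV D := Finsupp.lmapDomain K K (D.invol)

lemma sig_single (b : {x : E // x ∈ D.R} ⊕ I) (c : K) :
    D.sig (Finsupp.single b c) = Finsupp.single (D.invol b) c := by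
  simp [sig, Finsupp.lmapDomain_apply, Finsupp.mapDomain_single]

lemma sig_XX (a : {x : E // x ∈ D.R}) :
    D.sig (XX D a) = XX D ⟨-(a : E), D.neg_mem _ a.2⟩ := D.sig_single _ _

lemma sig_tv (j : I) : D.sig (tv D j) = tv D j := D.sig_single _ _

lemma simple_ne_neg_self (i : I) : D.simple i ≠ -D.simple i := by
  intro h
  apply D.simple_ne_zero i
  have h3 : (2:ℝ) • D.simple i = 0 := by
    nth_rewrite 1 [two_smul]
    nth_rewrite 1 [h]
    abel
  exact smul_right_injective E (two_ne_zero) (h3.trans (smul_zero (2:ℝ)).symm)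

lemma E_simple_zero (i : I) :
    Eop D d i (XX D ⟨D.simple i, D.simple_mem i⟩) = 0 := by
  rw [Eop_X]
  rw [dif_neg (D.two_smul_not_mem i)]
  rw [if_neg]
  exact D.simple_ne_neg_self i

lemma sig_E_single (i : I) (b : {x : E // x ∈ D.R} ⊕ I) :
    D.sig (Eop D d i (Finsupp.single b 1)) = Fop D d i (D.sig (Finsupp.single b 1)) := by
  cases b with
  | inr j =>
      show D.sig (Eop D d i (tv D j)) = Fop D d i (D.sig (tv D j))
      rw [Eop_tv, map_smul, sig_XX, D.sig_tv, Fop_tv]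
  | inl a =>
      show D.sig (Eop D d i (XX D a)) = Fop D d i (D.sig (XX D a))
      rw [D.sig_XX, Eop_X, Fop_X]
      by_cases h : (a : E) + D.simple i ∈ D.R
      · rw [dif_pos h]
        have h' : -(a : E) - D.simple i ∈ D.R := by
          have := D.neg_mem _ h
          convert this using 1
          abel
        rw [dif_pos h']
        -- a is not proportional to simple i
        have hprop : ∀ r : ℝ, (a : E) ≠ r • D.simple i := by
          intro r hr
          rcases D.prop_cases a.2 hr with h1 | h1
          · rw [h1] at h
            exact D.two_smul_not_mem i h
          · rw [h1] at h
            apply D.zero_not_mem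
            convert h using 1
            abel
        have hq : D.q i ((a:E)) = D.p i (-(a:E)) := by
          simpa using D.q_neg_eq_p (D.neg_mem _ a.2) (D.not_prop_neg hprop)
        rw [map_smul, sig_XX]
        congr 1
        · exact congrArg (fun n : ℕ => qnum (d i) ((n:ℤ)+1)) hq
        · exact congrArg (XX D) (Subtype.ext (by show -((a:E) + D.simple i) = -(a:E) - D.simple i; abel))
      · rw [dif_neg h]
        have h' : ¬(-(a : E) - D.simple i ∈ D.R) := by
          intro hc
          apply h
          have := D.neg_mem _ hc
          convert this using 1
          abel
        rw [dif_neg h']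
        by_cases h2 : (a : E) = -D.simple i
        · rw [if_pos h2, if_pos (show -(a:E) = D.simple i by rw [h2]; abel), D.sig_tv]
        · rw [if_neg h2, if_neg (show ¬(-(a:E) = D.simple i) by
            intro hc; apply h2; rw [← hc]; abel), map_zero]



lemma E_chain (i : I) (a : E) (ha : a ∈ D.R) (hprop : ∀ r : ℝ, a ≠ r • D.simple i) :
    ∀ k : ℕ, (Eop D d i ^ k) (XX D ⟨a, ha⟩) = 0 ∨
      ∃ h : a + (k : ℝ) • D.simple i ∈ D.R,
        (Eop D d i ^ k) (XX D ⟨a, ha⟩) =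
          (∏ s ∈ Finset.range k, qnum (d i) ((D.q i a : ℤ) + s + 1)) •
            XX D ⟨a + (k:ℝ) • D.simple i, h⟩ ∧
        D.q i (a + (k:ℝ) • D.simple i) = D.q i a + k := by
  intro k
  induction k with
  | zero =>
      right
      have he : a + ((0:ℕ):ℝ) • D.simple i = a := by norm_num
      refine ⟨by rw [he]; exact ha, ?_, by rw [he]; simp⟩
      rw [pow_zero, Module.End.one_apply]
      rw [Finset.prod_range_zero, one_smul]
      exact congrArg (XX D) (Subtype.ext he.symm)
  | succ k ih =>
      rw [pow_succ', Module.End.mul_apply]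
      rcases ih with h0 | ⟨hmem, heq, hq⟩
      · left
        rw [h0, map_zero]
      · rw [heq, map_smul, Eop_X]
        set b : E := a + (k:ℝ) • D.simple i with hb
        have hbprop : ∀ r : ℝ, b ≠ r • D.simple i := D.not_prop_add hprop (k:ℝ)
        by_cases hm : b + D.simple i ∈ D.R
        · right
          have he : b + D.simple i = a + ((k+1:ℕ):ℝ) • D.simple i := by
            rw [hb]; push_cast; module
          refine ⟨by rw [← he]; exact hm, ?_, ?_⟩
          · have hcoeff : qnum (d i) ((D.q i b : ℤ)+1) = qnum (d i) ((D.q i a : ℤ) + k + 1) := by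
              rw [hq]; congr 1 <;> push_cast <;> try ring
            rw [dif_pos hm, smul_smul, hcoeff, Finset.prod_range_succ]
            exact congrArg₂ _ rfl (congrArg (XX D) (Subtype.ext he))
          · rw [← he, D.q_succ hmem hbprop hm, hq]
            omega
        · left
          rw [dif_neg hm]
          rw [if_neg (by
            intro hc
            exact hbprop (-1) (by rw [neg_one_smul]; exact hc))]
          rw [smul_zero]


lemma qfact_one {dd : ℕ} (hd : 1 ≤ dd) : qfact dd 1 = 1 := by
  rw [qfact, Finset.prod_range_one]
  norm_num [qnum_one hd]

lemma qfact_two {dd : ℕ} (hd : 1 ≤ dd) : qfact dd 2 = qnum dd 2 := by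
  rw [qfact]
  rw [Finset.prod_range_succ, Finset.prod_range_one]
  norm_num [qnum_one hd]

lemma Gd_qnum_int {dd : ℕ} (hd : 1 ≤ dd) {m : ℤ} (hm : 0 ≤ m) : Gd (qnum dd m) := by
  lift m to ℕ using hm
  exact Gd_qnum hd m

lemma pow_apply_zero_of (T : VV D →ₗ[K] VV D) {m n : ℕ} (x : VV D)
    (h : (T ^ m) x = 0) (hmn : m ≤ n) : (T ^ n) x = 0 := by
  obtain ⟨r, rfl⟩ := Nat.exists_eq_add_of_le hmn
  rw [add_comm, pow_add, Module.End.mul_apply, h, map_zero]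

lemma E_part (hd1 : ∀ j, 1 ≤ d j) (i : I) (k : ℕ) (hk : 1 ≤ k)
    (b : {x : E // x ∈ D.R} ⊕ I) :
    (qfact (d i) k)⁻¹ • (Eop D d i ^ k) (Finsupp.single b (1:K)) = 0 ∨
    ∃ (b' : {x : E // x ∈ D.R} ⊕ I) (g : K), Gd g ∧
      (qfact (d i) k)⁻¹ • (Eop D d i ^ k) (Finsupp.single b (1:K))
        = g • Finsupp.single b' (1:K) := by
  have hfi : qfact (d i) k ≠ 0 := qfact_ne_zero (hd1 i) k
  cases b with
  | inr j =>
      have h1 : Eop D d i (Finsupp.single (Sum.inr j) (1:K)) =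
          qnum (d j) |D.pair (D.simple j) (D.simple i)| • XX D ⟨D.simple i, D.simple_mem i⟩ :=
        Eop_tv D d i j
      match k, hk with
      | 1, _ =>
        right
        refine ⟨Sum.inl ⟨D.simple i, D.simple_mem i⟩,
          qnum (d j) |D.pair (D.simple j) (D.simple i)|,
          Gd_qnum_int (hd1 j) (abs_nonneg _), ?_⟩
        rw [pow_one, h1, qfact_one (hd1 i), inv_one, one_smul]
        rfl
      | (k + 2), _ =>
        left
        have h2 : (Eop D d i ^ 2) (Finsupp.single (Sum.inr j) (1:K)) = 0 := by
          rw [pow_two, Module.End.mul_apply, h1, map_smul, E_simple_zero, smul_zero]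
        rw [D.pow_apply_zero_of _ _ h2 (by omega), smul_zero]
  | inl a =>
      by_cases hsi : (a : E) = D.simple i
      · left
        have ha : a = (⟨D.simple i, D.simple_mem i⟩ : {x : E // x ∈ D.R}) := Subtype.ext hsi
        have h1 : (Eop D d i ^ 1) (Finsupp.single (Sum.inl a) (1:K)) = 0 := by
          rw [pow_one, ha]
          exact E_simple_zero D d i
        rw [D.pow_apply_zero_of _ _ h1 hk, smul_zero]
      · by_cases hnsi : (a : E) = -D.simple i
        · -- a = -αᵢ
          have h1 : Eop D d i (Finsupp.single (Sum.inl a) (1:K)) = tv D i := by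
            have := Eop_X D d i a
            rw [show Finsupp.single (Sum.inl a) (1:K) = XX D a from rfl, this]
            rw [dif_neg (by rw [hnsi]; simpa using D.zero_not_mem), if_pos hnsi]
          match k, hk with
          | 1, _ =>
            right
            refine ⟨Sum.inr i, 1, Gd_one, ?_⟩
            rw [pow_one, h1, qfact_one (hd1 i), inv_one, one_smul, one_smul]
            rfl
          | 2, _ =>
            right
            have h2 : (Eop D d i ^ 2) (Finsupp.single (Sum.inl a) (1:K)) =
                qnum (d i) 2 • XX D ⟨D.simple i, D.simple_mem i⟩ := by
              rw [pow_two, Module.End.mul_apply, h1, Eop_tv, D.pair_self]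
              norm_num
            refine ⟨Sum.inl ⟨D.simple i, D.simple_mem i⟩, 1, Gd_one, ?_⟩
            rw [h2, qfact_two (hd1 i), smul_smul,
              inv_mul_cancel₀ (qnum_ne_zero (hd1 i) (by norm_num)), one_smul, one_smul]
            rfl
          | (k + 3), _ =>
            left
            have h3 : (Eop D d i ^ 3) (Finsupp.single (Sum.inl a) (1:K)) = 0 := by
              rw [show (3:ℕ) = 1 + 2 from rfl, pow_add, Module.End.mul_apply]
              rw [pow_two, Module.End.mul_apply, h1, Eop_tv, map_smul, pow_one,
                E_simple_zero, smul_zero]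
            rw [D.pow_apply_zero_of _ _ h3 (by omega), smul_zero]
        · -- generic case
          have hprop : ∀ r : ℝ, (a : E) ≠ r • D.simple i := by
            intro r hr
            rcases D.prop_cases a.2 hr with h' | h'
            · exact hsi h'
            · exact hnsi h'
          rcases D.E_chain d i (a : E) a.2 hprop k with h0 | ⟨hmem, heq, _⟩
          · left
            rw [show Finsupp.single (Sum.inl a) (1:K) = XX D a from rfl]
            rw [show XX D a = XX D ⟨(a:E), a.2⟩ from rfl, h0, smul_zero]
          · right
            obtain ⟨g, hg, hBg⟩ := qbinom_key (hd1 i) (D.q i (a:E) + k) (D.q i (a:E)) k le_rfl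
            refine ⟨Sum.inl ⟨(a:E) + (k:ℝ) • D.simple i, hmem⟩, g, hg, ?_⟩
            rw [show Finsupp.single (Sum.inl a) (1:K) = XX D ⟨(a:E), a.2⟩ from rfl]
            rw [heq, hBg, smul_smul]
            rw [inv_mul_eq_div, mul_div_assoc, div_self hfi, mul_one]
            rfl

lemma sig_Eop_apply (i : I) (x : VV D) :
    D.sig (Eop D d i x) = Fop D d i (D.sig x) := by
  have h : (D.sig ∘ₗ Eop D d i) = (Fop D d i ∘ₗ D.sig) := by
    apply Finsupp.lhom_ext
    intro b c
    have hc : Finsupp.single b c = c • Finsupp.single b (1:K) := by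
      rw [Finsupp.smul_single, smul_eq_mul, mul_one]
    simp only [LinearMap.comp_apply, hc, map_smul]
    rw [D.sig_E_single d i b]
  exact LinearMap.congr_fun h x

lemma sig_pow (i : I) (k : ℕ) (y : VV D) :
    (Fop D d i ^ k) (D.sig y) = D.sig ((Eop D d i ^ k) y) := by
  induction k with
  | zero => simp
  | succ k ih =>
      rw [pow_succ', pow_succ', Module.End.mul_apply, Module.End.mul_apply, ih,
        D.sig_Eop_apply d i]

end RootSystemData

/-- All divided powers of `E_i` and of `F_i` have matrix entries in
`ℕ[v,v⁻¹]` in the basis `{X_α} ∪ {t_j}` of `V`: applied to a basis vector,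
`([k]ᵢ!)⁻¹ E_i^k` (resp. `([k]ᵢ!)⁻¹ F_i^k`) gives `0` or `f` times a basis
vector where `f` is a Laurent polynomial in `v` with coefficients in `ℕ`. -/
theorem stmt14 {E : Type} [NormedAddCommGroup E] [InnerProductSpace ℝ E]
    [FiniteDimensional ℝ E] {I : Type} [Fintype I]
    (D : RootSystemData E I) (d : I → ℕ)
    (hd : ∀ i, 2 * (d i : ℝ) = ⟪D.simple i, D.simple i⟫)
    (hd123 : ∀ i, d i = 1 ∨ d i = 2 ∨ d i = 3)
    (hnorm : ∀ β ∈ D.R, (2 : ℝ) ≤ ⟪β, β⟫) :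
    ∀ i : I, ∀ k : ℕ, 1 ≤ k → ∀ b : {x : E // x ∈ D.R} ⊕ I,
      ((qfact (d i) k)⁻¹ • (Eop D d i ^ k) (Finsupp.single b (1 : K)) = 0 ∨
        ∃ (b' : {x : E // x ∈ D.R} ⊕ I) (s : Finset ℤ) (c : ℤ → ℕ),
          (qfact (d i) k)⁻¹ • (Eop D d i ^ k) (Finsupp.single b (1 : K))
            = (∑ m ∈ s, (c m : K) * qv ^ m) • Finsupp.single b' (1 : K)) ∧
      ((qfact (d i) k)⁻¹ • (Fop D d i ^ k) (Finsupp.single b (1 : K)) = 0 ∨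
        ∃ (b' : {x : E // x ∈ D.R} ⊕ I) (s : Finset ℤ) (c : ℤ → ℕ),
          (qfact (d i) k)⁻¹ • (Fop D d i ^ k) (Finsupp.single b (1 : K))
            = (∑ m ∈ s, (c m : K) * qv ^ m) • Finsupp.single b' (1 : K)) := by
  have hd1 : ∀ j, 1 ≤ d j := fun j => by rcases hd123 j with h|h|h <;> omega
  intro i k hk b
  constructor
  · rcases RootSystemData.E_part D d hd1 i k hk b with h0 | ⟨b', g, hg, heq⟩
    · left; exact h0
    · right
      obtain ⟨c, rfl⟩ := hg
      exact ⟨b', c.support, c, heq⟩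
  · have hsingle : Finsupp.single b (1:K) = D.sig (Finsupp.single (D.invol b) (1:K)) := by
      rw [D.sig_single, D.invol_invol]
    rw [hsingle, D.sig_pow d i k, ← map_smul]
    rcases RootSystemData.E_part D d hd1 i k hk (D.invol b) with h0 | ⟨b', g, hg, heq⟩
    · left; rw [h0, map_zero]
    · right
      obtain ⟨c, rfl⟩ := hg
      refine ⟨D.invol b', c.support, c, ?_⟩
      rw [heq, map_smul, D.sig_single]
      rfl
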